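/- In every infinite improvement path of the ring game G, player 1 is selected infinitely often. -/

import Mathlib

/-!
Game-theoretic formalization of Dijkstra's self-stabilization (Apt & Shoja).
Players are `Fin n`; a joint strategy is `s : Fin n → C`.
-/

/-- Payoff in the ring game `G` on the directed ring `0 → 1 → ⋯ → n-1 → 0`:
player `0` plays the anti-coordination game with respect to its predecessor
(player `n-1`, i.e. `0 - 1` in `Fin n`); every other player `i` plays the
coordination game with respect to its predecessor `i - 1`. -/
def ringPayoff {n : ℕ} [NeZero n] {C : Type*} [DecidableEq C]
    (s : Fin n → C) (i : Fin n) : ℕ :=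
  if i = 0 then (if s i = s (i - 1) then 0 else 1)
  else (if s i = s (i - 1) then 1 else 0)

/-- `s i` is a best response of player `i` to the strategies of the others in `s`. -/
def BestResponse {n : ℕ} {C : Type*}
    (p : (Fin n → C) → Fin n → ℕ) (s : Fin n → C) (i : Fin n) : Prop :=
  ∀ c : C, p (Function.update s i c) i ≤ p s i

/-- An improvement step from `s` to `s'` in which player `i` is selected:
only player `i` changes its strategy and its payoff strictly increases. -/
def StepAt {n : ℕ} {C : Type*}
    (p : (Fin n → C) → Fin n → ℕ) (i : Fin n) (s s' : Fin n → C) : Prop :=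
  (∀ j, j ≠ i → s' j = s j) ∧ p s i < p s' i

/-- A joint strategy is legitimate if exactly one player does not play a best response. -/
def Legitimate {n : ℕ} {C : Type*}
    (p : (Fin n → C) → Fin n → ℕ) (s : Fin n → C) : Prop :=
  ∃! i : Fin n, ¬ BestResponse p s i


lemma step_match {n : ℕ} [NeZero n] {C : Type*} [DecidableEq C]
    {i : Fin n} (hi : i ≠ 0) {s s' : Fin n → C}
    (h : StepAt (ringPayoff (n := n) (C := C)) i s s') : s' i = s' (i - 1) := by
  obtain ⟨_, hlt⟩ := h
  simp only [ringPayoff, if_neg hi] at hlt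
  by_contra hne
  rw [if_neg hne] at hlt
  split at hlt <;> omega

lemma no_step_of_match {n : ℕ} [NeZero n] {C : Type*} [DecidableEq C]
    {i : Fin n} (hi : i ≠ 0) {s s' : Fin n → C} (heq : s i = s (i - 1)) :
    ¬ StepAt (ringPayoff (n := n) (C := C)) i s s' := by
  rintro ⟨_, hlt⟩
  simp only [ringPayoff, if_neg hi, if_pos heq] at hlt
  split at hlt <;> omega

/-- In every infinite improvement path of the ring game `G`,
player `1` (here indexed as player `0`) is selected infinitely often. -/
theorem ring_game_player_one_selected_infinitely_often
    (n : ℕ) [NeZero n] (hn : 2 ≤ n)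
    (C : Type*) [Fintype C] [DecidableEq C] (hC : 2 ≤ Fintype.card C)
    (σ : ℕ → Fin n → C) (sel : ℕ → Fin n)
    (hpath : ∀ k : ℕ, StepAt (ringPayoff (n := n) (C := C)) (sel k) (σ k) (σ (k + 1))) :
    ∀ k : ℕ, ∃ m, k ≤ m ∧ sel m = 0 := by
  by_contra h
  push_neg at h
  obtain ⟨k, hk⟩ := h
  have Q : ∀ d : ℕ, ∃ K, k ≤ K ∧ ∀ m, K ≤ m → ∀ j : Fin n, j.val ≤ d → sel m ≠ j := by
    intro d
    induction d with
    | zero =>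
      refine ⟨k, le_refl k, fun m hm j hj hje => ?_⟩
      have hj0 : j = 0 := Fin.ext (by rw [Fin.val_zero]; omega)
      exact hk m hm (by rw [hje, hj0])
    | succ d ih =>
      obtain ⟨K, hkK, hK⟩ := ih
      by_cases hd : d + 1 < n
      · set i : Fin n := ⟨d + 1, hd⟩ with hidef
        have hival : i.val = d + 1 := rfl
        have hi0 : i ≠ 0 := by
          intro he
          have := congrArg Fin.val he
          rw [hival, Fin.val_zero] at this
          omega
        have him1 : (i - 1).val = d := by
          rw [Fin.sub_def]
          have h1n : (1 : Fin n).val = 1 := by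
            rw [Fin.val_one']
            exact Nat.mod_eq_of_lt (by omega)
          simp only [h1n, hival]
          have he : n - 1 + (d + 1) = d + n := by omega
          rw [he, Nat.add_mod_right]
          exact Nat.mod_eq_of_lt (by omega)
        by_cases hmove : ∃ m₀, K ≤ m₀ ∧ sel m₀ = i
        · obtain ⟨m₀, hm₀K, hm₀⟩ := hmove
          have inv : ∀ m, m₀ + 1 ≤ m → σ m i = σ m (i - 1) := by
            intro m hm
            induction m, hm using Nat.le_induction with
            | base =>
              have := hpath m₀
              rw [hm₀] at this
              exact step_match hi0 this
            | succ m hm ihm =>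
              have hsm : sel m ≠ i := fun he => no_step_of_match hi0 ihm (he ▸ hpath m)
              have hsm1 : sel m ≠ i - 1 := hK m (by omega) (i - 1) (le_of_eq him1)
              have e1 := (hpath m).1 i (Ne.symm hsm)
              have e2 := (hpath m).1 (i - 1) (Ne.symm hsm1)
              rw [e1, e2]; exact ihm
          refine ⟨m₀ + 1, by omega, fun m hm j hj hje => ?_⟩
          rcases Nat.lt_or_ge j.val (d + 1) with hlt | hge
          · exact hK m (by omega) j (by omega) hje
          · have hji : j = i := Fin.ext (by rw [hival]; omega)
            exact no_step_of_match hi0 (inv m hm) ((hje.trans hji) ▸ hpath m)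
        · push_neg at hmove
          refine ⟨K, hkK, fun m hm j hj hje => ?_⟩
          rcases Nat.lt_or_ge j.val (d + 1) with hlt | hge
          · exact hK m hm j (by omega) hje
          · have hji : j = i := Fin.ext (by rw [hival]; omega)
            exact hmove m hm (hje.trans hji)
      · refine ⟨K, hkK, fun m hm j hj => ?_⟩
        exact hK m hm j (by have := j.isLt; omega)
  obtain ⟨K, _, hK⟩ := Q (n - 1)
  exact hK K le_rfl (sel K) (by have := (sel K).isLt; omega) rfl
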